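/- Under the reparametrization hδ_l = hα_l/2 − ζ_l, hκ_l = hα_l/2 + ζ_l + iπ/2, hδ_r = hα_r/2 − ζ_r, hκ_r = hα_r/2 + ζ_r − iπ/2 and μ_{l/r} := sinh(h) sinh(hα_{l/r}) / (sinh(ζ_{l/r} − hα_{l/r}/2) sinh(ζ_{l/r} + hα_{l/r}/2)), the non-diagonal open XXZ Hamiltonian H_{n.d.} is, up to an additive multiple of the identity, similar to the two-boundary Temperley–Lieb Hamiltonian: there exist c ∈ ℂ and an invertible linear operator G on (ℂ²)^{⊗N} such that G H_{n.d.} G^{−1} = −μ_l b_l − μ_r b_r − Σ_{i=1}^{N−1} e_i + c·Id. -/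

import Mathlib

noncomputable section

/-- Basis labels of `(ℂ²)^{⊗N}`: a state (0 = ↑, 1 = ↓) for each of the `N` sites. -/
abbrev Conf (N : ℕ) := Fin N → Fin 2

def pauliX : Matrix (Fin 2) (Fin 2) ℂ := !![0, 1; 1, 0]
def pauliY : Matrix (Fin 2) (Fin 2) ℂ := !![0, -Complex.I; Complex.I, 0]
def pauliZ : Matrix (Fin 2) (Fin 2) ℂ := !![1, 0; 0, -1]
/-- `σ⁺ = (σˣ + iσʸ)/2`. -/
def pauliP : Matrix (Fin 2) (Fin 2) ℂ := !![0, 1; 0, 0]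
/-- `σ⁻ = (σˣ − iσʸ)/2`. -/
def pauliM : Matrix (Fin 2) (Fin 2) ℂ := !![0, 0; 1, 0]

open Fin.NatCast in
/-- `X_j`: the operator on `(ℂ²)^{⊗N}` acting as the 2×2 matrix `X` on the `j`-th tensor
factor (sites labelled `1,…,N`) and as the identity on the others. -/
def siteOp (N : ℕ) [NeZero N] (X : Matrix (Fin 2) (Fin 2) ℂ) (j : ℕ) :
    Matrix (Conf N) (Conf N) ℂ :=
  Matrix.of fun f g =>
    X (f ((j - 1 : ℕ) : Fin N)) (g ((j - 1 : ℕ) : Fin N)) *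
      ∏ k ∈ Finset.univ.erase ((j - 1 : ℕ) : Fin N), if f k = g k then (1 : ℂ) else 0

/-- The Temperley–Lieb generator
`e_i = −(1/2)(σˣᵢσˣᵢ₊₁ + σʸᵢσʸᵢ₊₁ + cosh(h)(σᶻᵢσᶻᵢ₊₁ − 1) + sinh(h)(σᶻᵢ₊₁ − σᶻᵢ))`. -/
def eOp (N : ℕ) [NeZero N] (h : ℂ) (i : ℕ) : Matrix (Conf N) (Conf N) ℂ :=
  (-(1 / 2 : ℂ)) •
    (siteOp N pauliX i * siteOp N pauliX (i + 1)
      + siteOp N pauliY i * siteOp N pauliY (i + 1)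
      + Complex.cosh h • (siteOp N pauliZ i * siteOp N pauliZ (i + 1) - 1)
      + Complex.sinh h • (siteOp N pauliZ (i + 1) - siteOp N pauliZ i))

/-- The left boundary operator
`b_l = (1/(2 sinh(hα_l)))(i e^{hθ_l} σ⁺₁ + i e^{−hθ_l} σ⁻₁ + cosh(hα_l) σᶻ₁) + (1/2)·Id`. -/
def blobL (N : ℕ) [NeZero N] (h αl θl : ℂ) : Matrix (Conf N) (Conf N) ℂ :=
  (1 / (2 * Complex.sinh (h * αl))) •
    ((Complex.I * Complex.exp (h * θl)) • siteOp N pauliP 1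
      + (Complex.I * Complex.exp (-(h * θl))) • siteOp N pauliM 1
      + Complex.cosh (h * αl) • siteOp N pauliZ 1)
  + (1 / 2 : ℂ) • 1

/-- The right boundary operator
`b_r = −(1/(2 sinh(hα_r)))(i e^{hθ_r} σ⁺_N + i e^{−hθ_r} σ⁻_N + cosh(hα_r) σᶻ_N) + (1/2)·Id`. -/
def blobR (N : ℕ) [NeZero N] (h αr θr : ℂ) : Matrix (Conf N) (Conf N) ℂ :=
  (-(1 / (2 * Complex.sinh (h * αr)))) •
    ((Complex.I * Complex.exp (h * θr)) • siteOp N pauliP N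
      + (Complex.I * Complex.exp (-(h * θr))) • siteOp N pauliM N
      + Complex.cosh (h * αr) • siteOp N pauliZ N)
  + (1 / 2 : ℂ) • 1

/-- The non-diagonal open XXZ Hamiltonian `H_{n.d.}`, parametrized by the combinations
`hδ_l, hκ_l, hθ_l, hδ_r, hκ_r, hθ_r` (each the product of `h` with the corresponding
boundary parameter). -/
def Hnd (N : ℕ) [NeZero N] (h hdl hkl htl hdr hkr htr : ℂ) : Matrix (Conf N) (Conf N) ℂ :=
  (1 / 2 : ℂ) • (∑ i ∈ Finset.Icc 1 (N - 1),
    (siteOp N pauliX i * siteOp N pauliX (i + 1)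
      + siteOp N pauliY i * siteOp N pauliY (i + 1)
      + Complex.cosh h • (siteOp N pauliZ i * siteOp N pauliZ (i + 1))
      + Complex.sinh h • (siteOp N pauliZ (i + 1) - siteOp N pauliZ i)))
  + (Complex.sinh h / (2 * Complex.sinh hdl * Complex.cosh hkl)) •
      (Complex.exp htl • siteOp N pauliP 1 + Complex.exp (-htl) • siteOp N pauliM 1
        + Complex.sinh (hdl + hkl) • siteOp N pauliZ 1)
  + (Complex.sinh h / (2 * Complex.sinh hdr * Complex.cosh hkr)) •
      (Complex.exp htr • siteOp N pauliP N + Complex.exp (-htr) • siteOp N pauliM N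
        - Complex.sinh (hdr + hkr) • siteOp N pauliZ N)

def sgnC (N : ℕ) (f : Conf N) : ℂ := ∏ j, (-1 : ℂ) ^ (f j : ℕ)
def Gmat (N : ℕ) : Matrix (Conf N) (Conf N) ℂ := Matrix.diagonal (sgnC N)

lemma sgnC_mul_self (N : ℕ) (f : Conf N) : sgnC N f * sgnC N f = 1 := by
  rw [sgnC, ← Finset.prod_mul_distrib]
  apply Finset.prod_eq_one
  intro j _
  rw [← pow_add]
  exact (neg_one_pow_eq_one_iff_even (by norm_num)).2 (Even.add_self _)

lemma Gmat_mul_self (N : ℕ) : Gmat N * Gmat N = 1 := by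
  rw [Gmat, Matrix.diagonal_mul_diagonal]
  have : (fun f => sgnC N f * sgnC N f) = fun _ => (1:ℂ) := funext (sgnC_mul_self N)
  rw [this, Matrix.diagonal_one]

open Fin.NatCast in
lemma conj_siteOp (N : ℕ) [NeZero N] (X : Matrix (Fin 2) (Fin 2) ℂ) (j : ℕ) (ε : ℂ)
    (hX : ∀ a b : Fin 2, (-1 : ℂ) ^ (a : ℕ) * ((-1 : ℂ) ^ (b : ℕ)) * X a b = ε * X a b) :
    Gmat N * siteOp N X j * Gmat N = ε • siteOp N X j := by
  ext f g
  set j' : Fin N := ((j - 1 : ℕ) : Fin N)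
  have : (Gmat N * siteOp N X j * Gmat N) f g = sgnC N f * (siteOp N X j f g) * sgnC N g := by
    rw [Gmat, Matrix.mul_diagonal, Matrix.diagonal_mul]
  rw [this]
  show sgnC N f * (X (f j') (g j') * ∏ k ∈ Finset.univ.erase j', if f k = g k then (1:ℂ) else 0)
      * sgnC N g = ε • (X (f j') (g j') * ∏ k ∈ Finset.univ.erase j', if f k = g k then (1:ℂ) else 0)
  by_cases hfg : ∀ k ∈ Finset.univ.erase j', f k = g k
  · have hprod : (∏ k ∈ Finset.univ.erase j', if f k = g k then (1:ℂ) else 0) = 1 :=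
      Finset.prod_eq_one (fun k hk => by rw [if_pos (hfg k hk)])
    rw [hprod, mul_one]
    have hf : sgnC N f = (-1 : ℂ) ^ (f j' : ℕ) * ∏ k ∈ Finset.univ.erase j', (-1 : ℂ) ^ (f k : ℕ) :=
      (Finset.mul_prod_erase Finset.univ _ (Finset.mem_univ j')).symm
    have hg : sgnC N g = (-1 : ℂ) ^ (g j' : ℕ) * ∏ k ∈ Finset.univ.erase j', (-1 : ℂ) ^ (g k : ℕ) :=
      (Finset.mul_prod_erase Finset.univ _ (Finset.mem_univ j')).symm
    have herase : (∏ k ∈ Finset.univ.erase j', (-1 : ℂ) ^ (f k : ℕ)) *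
        ∏ k ∈ Finset.univ.erase j', (-1 : ℂ) ^ (g k : ℕ) = 1 := by
      rw [← Finset.prod_mul_distrib]
      apply Finset.prod_eq_one
      intro k hk
      rw [hfg k hk, ← pow_add]
      exact (neg_one_pow_eq_one_iff_even (by norm_num)).2 (Even.add_self _)
    have hXab := hX (f j') (g j')
    rw [hf, hg, smul_eq_mul]
    calc (-1:ℂ) ^ (f j' : ℕ) * (∏ k ∈ Finset.univ.erase j', (-1 : ℂ) ^ (f k : ℕ)) * X (f j') (g j') *
          ((-1:ℂ) ^ (g j' : ℕ) * ∏ k ∈ Finset.univ.erase j', (-1 : ℂ) ^ (g k : ℕ))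
        = ((-1:ℂ) ^ (f j' : ℕ) * ((-1:ℂ) ^ (g j' : ℕ)) * X (f j') (g j')) *
          ((∏ k ∈ Finset.univ.erase j', (-1 : ℂ) ^ (f k : ℕ)) *
            ∏ k ∈ Finset.univ.erase j', (-1 : ℂ) ^ (g k : ℕ)) := by ring
      _ = ε * X (f j') (g j') := by rw [hXab, herase, mul_one]
  · push_neg at hfg
    obtain ⟨k, hk, hne⟩ := hfg
    have hprod : (∏ k ∈ Finset.univ.erase j', if f k = g k then (1:ℂ) else 0) = 0 :=
      Finset.prod_eq_zero hk (by rw [if_neg hne])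
    rw [hprod]
    simp

lemma conjX (N : ℕ) [NeZero N] (j : ℕ) :
    Gmat N * siteOp N pauliX j * Gmat N = -siteOp N pauliX j := by
  rw [conj_siteOp N pauliX j (-1) (by intro a b; fin_cases a <;> fin_cases b <;> simp [pauliX]),
    neg_one_smul]
lemma conjY (N : ℕ) [NeZero N] (j : ℕ) :
    Gmat N * siteOp N pauliY j * Gmat N = -siteOp N pauliY j := by
  rw [conj_siteOp N pauliY j (-1) (by intro a b; fin_cases a <;> fin_cases b <;> simp [pauliY]),
    neg_one_smul]
lemma conjZ (N : ℕ) [NeZero N] (j : ℕ) :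
    Gmat N * siteOp N pauliZ j * Gmat N = siteOp N pauliZ j := by
  rw [conj_siteOp N pauliZ j 1 (by intro a b; fin_cases a <;> fin_cases b <;> simp [pauliZ]),
    one_smul]
lemma conjP (N : ℕ) [NeZero N] (j : ℕ) :
    Gmat N * siteOp N pauliP j * Gmat N = -siteOp N pauliP j := by
  rw [conj_siteOp N pauliP j (-1) (by intro a b; fin_cases a <;> fin_cases b <;> simp [pauliP]),
    neg_one_smul]
lemma conjM (N : ℕ) [NeZero N] (j : ℕ) :
    Gmat N * siteOp N pauliM j * Gmat N = -siteOp N pauliM j := by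
  rw [conj_siteOp N pauliM j (-1) (by intro a b; fin_cases a <;> fin_cases b <;> simp [pauliM]),
    neg_one_smul]

lemma conj_mul2 (N : ℕ) (A B : Matrix (Conf N) (Conf N) ℂ) :
    Gmat N * (A * B) * Gmat N = (Gmat N * A * Gmat N) * (Gmat N * B * Gmat N) := by
  simp only [mul_assoc]
  rw [← mul_assoc (Gmat N) (Gmat N), Gmat_mul_self, one_mul]

lemma conj_term (N : ℕ) [NeZero N] (h : ℂ) (i : ℕ) :
    Gmat N * (siteOp N pauliX i * siteOp N pauliX (i + 1)
      + siteOp N pauliY i * siteOp N pauliY (i + 1)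
      + Complex.cosh h • (siteOp N pauliZ i * siteOp N pauliZ (i + 1))
      + Complex.sinh h • (siteOp N pauliZ (i + 1) - siteOp N pauliZ i)) * Gmat N
    = siteOp N pauliX i * siteOp N pauliX (i + 1)
      + siteOp N pauliY i * siteOp N pauliY (i + 1)
      + Complex.cosh h • (siteOp N pauliZ i * siteOp N pauliZ (i + 1))
      + Complex.sinh h • (siteOp N pauliZ (i + 1) - siteOp N pauliZ i) := by
  simp only [Matrix.mul_add, Matrix.add_mul, mul_smul_comm, smul_mul_assoc,
    Matrix.mul_sub, Matrix.sub_mul]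
  rw [conj_mul2, conj_mul2, conj_mul2]
  simp only [conjX, conjY, conjZ, neg_mul_neg]

lemma conj_Hnd (N : ℕ) [NeZero N] (h hdl hkl htl hdr hkr htr : ℂ) :
    Gmat N * Hnd N h hdl hkl htl hdr hkr htr * Gmat N =
    (1 / 2 : ℂ) • (∑ i ∈ Finset.Icc 1 (N - 1),
      (siteOp N pauliX i * siteOp N pauliX (i + 1)
        + siteOp N pauliY i * siteOp N pauliY (i + 1)
        + Complex.cosh h • (siteOp N pauliZ i * siteOp N pauliZ (i + 1))
        + Complex.sinh h • (siteOp N pauliZ (i + 1) - siteOp N pauliZ i)))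
    + (Complex.sinh h / (2 * Complex.sinh hdl * Complex.cosh hkl)) •
        (Complex.exp htl • (-siteOp N pauliP 1) + Complex.exp (-htl) • (-siteOp N pauliM 1)
          + Complex.sinh (hdl + hkl) • siteOp N pauliZ 1)
    + (Complex.sinh h / (2 * Complex.sinh hdr * Complex.cosh hkr)) •
        (Complex.exp htr • (-siteOp N pauliP N) + Complex.exp (-htr) • (-siteOp N pauliM N)
          - Complex.sinh (hdr + hkr) • siteOp N pauliZ N) := by
  rw [Hnd]
  simp only [Matrix.mul_add, Matrix.add_mul, mul_smul_comm, smul_mul_assoc,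
    Matrix.mul_sub, Matrix.sub_mul, Finset.mul_sum, Finset.sum_mul]
  rw [Finset.sum_congr rfl (fun i _ => by
    simpa only [Matrix.mul_add, Matrix.add_mul, mul_smul_comm, smul_mul_assoc,
      Matrix.mul_sub, Matrix.sub_mul] using conj_term N h i)]
  rw [conjP, conjP, conjM, conjM, conjZ, conjZ]

lemma cosh_add_pihalf (x : ℂ) :
    Complex.cosh (x + (Real.pi : ℂ) * Complex.I / 2) = Complex.I * Complex.sinh x := by
  have h2 : (Real.pi : ℂ) * Complex.I / 2 = ((Real.pi/2 : ℝ) : ℂ) * Complex.I := by push_cast; ring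
  rw [h2, Complex.cosh_add, Complex.cosh_mul_I, Complex.sinh_mul_I,
    ← Complex.ofReal_cos, ← Complex.ofReal_sin, Real.cos_pi_div_two, Real.sin_pi_div_two]
  push_cast; ring

lemma sinh_add_pihalf (x : ℂ) :
    Complex.sinh (x + (Real.pi : ℂ) * Complex.I / 2) = Complex.I * Complex.cosh x := by
  have h2 : (Real.pi : ℂ) * Complex.I / 2 = ((Real.pi/2 : ℝ) : ℂ) * Complex.I := by push_cast; ring
  rw [h2, Complex.sinh_add, Complex.cosh_mul_I, Complex.sinh_mul_I,
    ← Complex.ofReal_cos, ← Complex.ofReal_sin, Real.cos_pi_div_two, Real.sin_pi_div_two]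
  push_cast; ring

lemma cosh_sub_pihalf (x : ℂ) :
    Complex.cosh (x - (Real.pi : ℂ) * Complex.I / 2) = -(Complex.I * Complex.sinh x) := by
  have h2 : x - (Real.pi : ℂ) * Complex.I / 2 = x + ((-(Real.pi/2) : ℝ) : ℂ) * Complex.I := by
    push_cast; ring
  rw [h2, Complex.cosh_add, Complex.cosh_mul_I, Complex.sinh_mul_I,
    ← Complex.ofReal_cos, ← Complex.ofReal_sin]
  rw [Real.cos_neg, Real.sin_neg, Real.cos_pi_div_two, Real.sin_pi_div_two]
  push_cast; ring

lemma sinh_sub_pihalf (x : ℂ) :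
    Complex.sinh (x - (Real.pi : ℂ) * Complex.I / 2) = -(Complex.I * Complex.cosh x) := by
  have h2 : x - (Real.pi : ℂ) * Complex.I / 2 = x + ((-(Real.pi/2) : ℝ) : ℂ) * Complex.I := by
    push_cast; ring
  rw [h2, Complex.sinh_add, Complex.cosh_mul_I, Complex.sinh_mul_I,
    ← Complex.ofReal_cos, ← Complex.ofReal_sin]
  rw [Real.cos_neg, Real.sin_neg, Real.cos_pi_div_two, Real.sin_pi_div_two]
  push_cast; ring

lemma bdyL (N : ℕ) [NeZero N] (h αl ζl θl : ℂ) (hαl : Complex.sinh (h * αl) ≠ 0)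
    (h1 : Complex.sinh (ζl - h * αl / 2) ≠ 0) (h2 : Complex.sinh (ζl + h * αl / 2) ≠ 0) :
    (Complex.sinh h / (2 * Complex.sinh (h * αl / 2 - ζl) *
        Complex.cosh (h * αl / 2 + ζl + (Real.pi : ℂ) * Complex.I / 2))) •
      (Complex.exp (h * θl) • (-siteOp N pauliP 1)
        + Complex.exp (-(h * θl)) • (-siteOp N pauliM 1)
        + Complex.sinh ((h * αl / 2 - ζl) + (h * αl / 2 + ζl + (Real.pi : ℂ) * Complex.I / 2)) •
            siteOp N pauliZ 1)
    = (-(Complex.sinh h * Complex.sinh (h * αl) /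
          (Complex.sinh (ζl - h * αl / 2) * Complex.sinh (ζl + h * αl / 2)))) • blobL N h αl θl
      + (Complex.sinh h * Complex.sinh (h * αl) /
          (Complex.sinh (ζl - h * αl / 2) * Complex.sinh (ζl + h * αl / 2)) / 2) •
          (1 : Matrix (Conf N) (Conf N) ℂ) := by
  have e1 : Complex.sinh (h * αl / 2 - ζl) = -Complex.sinh (ζl - h * αl / 2) := by
    rw [show h * αl / 2 - ζl = -(ζl - h * αl / 2) by ring, Complex.sinh_neg]
  have e2 : Complex.cosh (h * αl / 2 + ζl + (Real.pi : ℂ) * Complex.I / 2)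
      = Complex.I * Complex.sinh (ζl + h * αl / 2) := by
    rw [show h * αl / 2 + ζl + (Real.pi : ℂ) * Complex.I / 2
        = (ζl + h * αl / 2) + (Real.pi : ℂ) * Complex.I / 2 by ring, cosh_add_pihalf]
  have e3 : Complex.sinh ((h * αl / 2 - ζl) + (h * αl / 2 + ζl + (Real.pi : ℂ) * Complex.I / 2))
      = Complex.I * Complex.cosh (h * αl) := by
    rw [show (h * αl / 2 - ζl) + (h * αl / 2 + ζl + (Real.pi : ℂ) * Complex.I / 2)
        = h * αl + (Real.pi : ℂ) * Complex.I / 2 by ring, sinh_add_pihalf]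
  rw [e1, e2, e3, blobL]
  set S1 := Complex.sinh (ζl - h * αl / 2) with hS1
  set S2 := Complex.sinh (ζl + h * αl / 2) with hS2
  set Sh := Complex.sinh (h * αl) with hSh
  match_scalars
  · field_simp
    linear_combination (Complex.sinh h) * Complex.I_sq
  · field_simp
    linear_combination (Complex.sinh h) * Complex.I_sq
  · field_simp
  · ring

lemma bdyR (N : ℕ) [NeZero N] (h αr ζr θr : ℂ) (hαr : Complex.sinh (h * αr) ≠ 0)
    (h1 : Complex.sinh (ζr - h * αr / 2) ≠ 0) (h2 : Complex.sinh (ζr + h * αr / 2) ≠ 0) :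
    (Complex.sinh h / (2 * Complex.sinh (h * αr / 2 - ζr) *
        Complex.cosh (h * αr / 2 + ζr - (Real.pi : ℂ) * Complex.I / 2))) •
      (Complex.exp (h * θr) • (-siteOp N pauliP N)
        + Complex.exp (-(h * θr)) • (-siteOp N pauliM N)
        - Complex.sinh ((h * αr / 2 - ζr) + (h * αr / 2 + ζr - (Real.pi : ℂ) * Complex.I / 2)) •
            siteOp N pauliZ N)
    = (-(Complex.sinh h * Complex.sinh (h * αr) /
          (Complex.sinh (ζr - h * αr / 2) * Complex.sinh (ζr + h * αr / 2)))) • blobR N h αr θr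
      + (Complex.sinh h * Complex.sinh (h * αr) /
          (Complex.sinh (ζr - h * αr / 2) * Complex.sinh (ζr + h * αr / 2)) / 2) •
          (1 : Matrix (Conf N) (Conf N) ℂ) := by
  have e1 : Complex.sinh (h * αr / 2 - ζr) = -Complex.sinh (ζr - h * αr / 2) := by
    rw [show h * αr / 2 - ζr = -(ζr - h * αr / 2) by ring, Complex.sinh_neg]
  have e2 : Complex.cosh (h * αr / 2 + ζr - (Real.pi : ℂ) * Complex.I / 2)
      = -(Complex.I * Complex.sinh (ζr + h * αr / 2)) := by
    rw [show h * αr / 2 + ζr - (Real.pi : ℂ) * Complex.I / 2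
        = (ζr + h * αr / 2) - (Real.pi : ℂ) * Complex.I / 2 by ring, cosh_sub_pihalf]
  have e3 : Complex.sinh ((h * αr / 2 - ζr) + (h * αr / 2 + ζr - (Real.pi : ℂ) * Complex.I / 2))
      = -(Complex.I * Complex.cosh (h * αr)) := by
    rw [show (h * αr / 2 - ζr) + (h * αr / 2 + ζr - (Real.pi : ℂ) * Complex.I / 2)
        = h * αr - (Real.pi : ℂ) * Complex.I / 2 by ring, sinh_sub_pihalf]
  rw [e1, e2, e3, blobR]
  set S1 := Complex.sinh (ζr - h * αr / 2) with hS1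
  set S2 := Complex.sinh (ζr + h * αr / 2) with hS2
  set Sh := Complex.sinh (h * αr) with hSh
  match_scalars
  · field_simp
    linear_combination (-Complex.sinh h) * Complex.I_sq
  · field_simp
    linear_combination (-Complex.sinh h) * Complex.I_sq
  · field_simp
  · ring

lemma sum_term_eq (N : ℕ) [NeZero N] (h : ℂ) :
    (1 / 2 : ℂ) • (∑ i ∈ Finset.Icc 1 (N - 1),
      (siteOp N pauliX i * siteOp N pauliX (i + 1)
        + siteOp N pauliY i * siteOp N pauliY (i + 1)
        + Complex.cosh h • (siteOp N pauliZ i * siteOp N pauliZ (i + 1))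
        + Complex.sinh h • (siteOp N pauliZ (i + 1) - siteOp N pauliZ i)))
    = -(∑ i ∈ Finset.Icc 1 (N - 1), eOp N h i)
      + (((N - 1 : ℕ) : ℂ) * Complex.cosh h / 2) • (1 : Matrix (Conf N) (Conf N) ℂ) := by
  have hi : ∀ i : ℕ, (1 / 2 : ℂ) • (siteOp N pauliX i * siteOp N pauliX (i + 1)
        + siteOp N pauliY i * siteOp N pauliY (i + 1)
        + Complex.cosh h • (siteOp N pauliZ i * siteOp N pauliZ (i + 1))
        + Complex.sinh h • (siteOp N pauliZ (i + 1) - siteOp N pauliZ i))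
      = -eOp N h i + (Complex.cosh h / 2) • (1 : Matrix (Conf N) (Conf N) ℂ) := by
    intro i
    rw [eOp]
    module
  rw [Finset.smul_sum, Finset.sum_congr rfl (fun i _ => hi i), Finset.sum_add_distrib,
    ← Finset.sum_neg_distrib, Finset.sum_const, Nat.card_Icc]
  congr 1
  rw [← Nat.cast_smul_eq_nsmul ℂ, smul_smul]
  congr 1
  push_cast
  ring


/-- Under the reparametrization `hδ_l = hα_l/2 − ζ_l`,
`hκ_l = hα_l/2 + ζ_l + iπ/2`, `hδ_r = hα_r/2 − ζ_r`, `hκ_r = hα_r/2 + ζ_r − iπ/2` and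
`μ_{l/r} = sinh(h) sinh(hα_{l/r}) / (sinh(ζ_{l/r} − hα_{l/r}/2) sinh(ζ_{l/r} + hα_{l/r}/2))`,
the Hamiltonian `H_{n.d.}` is, up to an additive multiple of the identity, similar to the
two-boundary Temperley–Lieb Hamiltonian `−μ_l b_l − μ_r b_r − Σ e_i`. -/
theorem Hnd_similar_to_two_boundary_TL_hamiltonian (N : ℕ) [NeZero N] (hN : 2 ≤ N)
    (h αl αr ζl ζr θl θr : ℂ)
    (hαl : Complex.sinh (h * αl) ≠ 0) (hαr : Complex.sinh (h * αr) ≠ 0)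
    (hζl₁ : Complex.sinh (ζl - h * αl / 2) ≠ 0) (hζl₂ : Complex.sinh (ζl + h * αl / 2) ≠ 0)
    (hζr₁ : Complex.sinh (ζr - h * αr / 2) ≠ 0) (hζr₂ : Complex.sinh (ζr + h * αr / 2) ≠ 0) :
    ∃ (c : ℂ) (G : Matrix (Conf N) (Conf N) ℂ), IsUnit G ∧
      G * Hnd N h (h * αl / 2 - ζl) (h * αl / 2 + ζl + (Real.pi : ℂ) * Complex.I / 2)
            (h * θl) (h * αr / 2 - ζr) (h * αr / 2 + ζr - (Real.pi : ℂ) * Complex.I / 2)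
            (h * θr) * G⁻¹
        = (-(Complex.sinh h * Complex.sinh (h * αl) /
              (Complex.sinh (ζl - h * αl / 2) * Complex.sinh (ζl + h * αl / 2)))) •
              blobL N h αl θl
          + (-(Complex.sinh h * Complex.sinh (h * αr) /
              (Complex.sinh (ζr - h * αr / 2) * Complex.sinh (ζr + h * αr / 2)))) •
              blobR N h αr θr
          - (∑ i ∈ Finset.Icc 1 (N - 1), eOp N h i)
          + c • 1 := by
  refine ⟨((N - 1 : ℕ) : ℂ) * Complex.cosh h / 2
      + Complex.sinh h * Complex.sinh (h * αl) /
          (Complex.sinh (ζl - h * αl / 2) * Complex.sinh (ζl + h * αl / 2)) / 2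
      + Complex.sinh h * Complex.sinh (h * αr) /
          (Complex.sinh (ζr - h * αr / 2) * Complex.sinh (ζr + h * αr / 2)) / 2,
    Gmat N, ⟨⟨Gmat N, Gmat N, Gmat_mul_self N, Gmat_mul_self N⟩, rfl⟩, ?_⟩
  rw [Matrix.inv_eq_right_inv (Gmat_mul_self N), conj_Hnd, sum_term_eq,
    bdyL N h αl ζl θl hαl hζl₁ hζl₂, bdyR N h αr ζr θr hαr hζr₁ hζr₂]
  module
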